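/- Let X ⊆ ℝⁿ be nonempty closed convex, and for t = 1,...,T let f_t : ℝⁿ → ℝ be μ-strongly convex on X with L-Lipschitz gradient, with unique minimizer x_t* over X. Fix γ ≥ L and h ∈ (0,1], and generate x_{t+1} = x_t + h(Π_X(x_t − (1/γ)∇f_t(x_t)) − x_t) from an initial x_1 ∈ X. Then with ρ = (1 − hμ/γ)^{1/2}, ∑_{t=1}^T ‖x_t − x_t*‖ ≤ (1/(1−ρ))(‖x_1 − x_1*‖ − ρ‖x_T − x_T*‖) + (1/(1−ρ)) ∑_{t=2}^T ‖x_t* − x_{t-1}*‖. -/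

import Mathlib

open scoped RealInnerProductSpace
open Finset

lemma descent_aux {E : Type*} [NormedAddCommGroup E] [InnerProductSpace ℝ E] [CompleteSpace E]
    {X : Set E} (hXcv : Convex ℝ X) {f : E → ℝ} {g : E → E}
    (hg : ∀ z, HasGradientAt f (g z) z) {L : ℝ}
    (hlip : ∀ z ∈ X, ∀ w ∈ X, ‖g z - g w‖ ≤ L * ‖z - w‖)
    {x y : E} (hx : x ∈ X) (hy : y ∈ X) :
    f y ≤ f x + ⟪g x, y - x⟫ + L / 2 * ‖y - x‖ ^ 2 := by
  set c : ℝ → E := fun s => x + s • (y - x) with hc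
  have hcmem : ∀ s ∈ Set.Icc (0:ℝ) 1, c s ∈ X := by
    intro s hs
    have : c s = (1 - s) • x + s • y := by
      simp only [hc]; module
    rw [this]
    exact hXcv hx hy (by linarith [hs.2]) hs.1 (by ring)
  have hder : ∀ s : ℝ, HasDerivAt (fun u => f (c u)) ⟪g (c s), y - x⟫ s := by
    intro s
    have h1 : HasDerivAt c (y - x) s := by
      simpa [hc] using ((hasDerivAt_id s).smul_const (y - x)).const_add x
    have h2 := (hg (c s)).hasFDerivAt.comp_hasDerivAt s h1
    simp at h2
    exact h2
  have hcont : ContinuousOn (fun s : ℝ => ⟪g (c s), y - x⟫) (Set.Icc 0 1) := by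
    have hlips : LipschitzOnWith (Real.toNNReal (L * ‖y - x‖)) (fun s => g (c s))
        (Set.Icc (0:ℝ) 1) := by
      rw [lipschitzOnWith_iff_dist_le_mul]
      intro s hs u hu
      rw [dist_eq_norm, dist_eq_norm]
      calc ‖g (c s) - g (c u)‖ ≤ L * ‖c s - c u‖ :=
            hlip _ (hcmem s hs) _ (hcmem u hu)
        _ = L * ‖y - x‖ * ‖s - u‖ := by
            simp only [hc]
            rw [show x + s • (y - x) - (x + u • (y - x)) = (s - u) • (y - x) by module]
            rw [norm_smul]; simp [Real.norm_eq_abs]; ring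
        _ ≤ Real.toNNReal (L * ‖y - x‖) * ‖s - u‖ := by
            gcongr
            exact Real.le_coe_toNNReal _
    exact (hlips.continuousOn.inner continuousOn_const)
  have hint : IntervalIntegrable (fun s : ℝ => ⟪g (c s), y - x⟫) MeasureTheory.volume 0 1 := by
    apply ContinuousOn.intervalIntegrable
    rwa [Set.uIcc_of_le (by norm_num : (0:ℝ) ≤ 1)]
  have hftc : (∫ s in (0:ℝ)..1, ⟪g (c s), y - x⟫) = f (c 1) - f (c 0) :=
    intervalIntegral.integral_eq_sub_of_hasDerivAt (fun s _ => hder s) hint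
  have hbound : ∀ s ∈ Set.Icc (0:ℝ) 1,
      ⟪g (c s), y - x⟫ ≤ ⟪g x, y - x⟫ + L * s * ‖y - x‖ ^ 2 := by
    intro s hs
    have h1 : ⟪g (c s) - g x, y - x⟫ ≤ ‖g (c s) - g x‖ * ‖y - x‖ :=
      real_inner_le_norm _ _
    have h2 : ‖g (c s) - g x‖ ≤ L * (s * ‖y - x‖) := by
      have := hlip _ (hcmem s hs) _ hx
      calc ‖g (c s) - g x‖ ≤ L * ‖c s - x‖ := this
        _ = L * (s * ‖y - x‖) := by
            simp only [hc, add_sub_cancel_left, norm_smul, Real.norm_eq_abs,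
              abs_of_nonneg hs.1]
    have h3 : ⟪g (c s) - g x, y - x⟫ = ⟪g (c s), y - x⟫ - ⟪g x, y - x⟫ :=
      inner_sub_left _ _ _
    nlinarith [norm_nonneg (y - x), mul_le_mul_of_nonneg_right h2 (norm_nonneg (y - x))]
  have hmono : (∫ s in (0:ℝ)..1, ⟪g (c s), y - x⟫)
      ≤ ∫ s in (0:ℝ)..1, (⟪g x, y - x⟫ + L * s * ‖y - x‖ ^ 2) := by
    apply intervalIntegral.integral_mono_on (by norm_num) hint
    · apply ContinuousOn.intervalIntegrable
      apply Continuous.continuousOn; continuity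
    · exact hbound
  have hval : (∫ s in (0:ℝ)..1, (⟪g x, y - x⟫ + L * s * ‖y - x‖ ^ 2))
      = ⟪g x, y - x⟫ + L / 2 * ‖y - x‖ ^ 2 := by
    have : (fun s : ℝ => ⟪g x, y - x⟫ + L * s * ‖y - x‖ ^ 2)
        = fun s : ℝ => ⟪g x, y - x⟫ + (L * ‖y - x‖ ^ 2) * s := by
      funext s; ring
    rw [this, intervalIntegral.integral_add intervalIntegrable_const
      ((intervalIntegral.intervalIntegrable_id (μ := MeasureTheory.volume)
        (a := (0:ℝ)) (b := 1)).const_mul _),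
      intervalIntegral.integral_const_mul, integral_id]
    simp; ring
  have hc0 : c 0 = x := by simp [hc]
  have hc1 : c 1 = y := by simp [hc]
  rw [hc0, hc1] at hftc
  have := hmono.trans_eq hval
  linarith [hftc, this]

lemma proj_vi {E : Type*} [NormedAddCommGroup E] [InnerProductSpace ℝ E]
    {X : Set E} (hXcv : Convex ℝ X) {u p : E} (hp : p ∈ X)
    (hm : ∀ z ∈ X, ‖p - u‖ ≤ ‖z - u‖) : ∀ z ∈ X, ⟪u - p, z - p⟫ ≤ 0 := by
  have heq : ‖u - p‖ = ⨅ w : X, ‖u - w‖ := by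
    haveI : Nonempty X := ⟨⟨p, hp⟩⟩
    apply le_antisymm
    · apply le_ciInf
      intro w
      rw [norm_sub_rev, norm_sub_rev u]
      exact hm w w.2
    · have hbdd : BddBelow (Set.range fun w : X => ‖u - w‖) := by
        refine ⟨0, ?_⟩
        rintro r ⟨w, rfl⟩
        exact norm_nonneg _
      exact ciInf_le hbdd ⟨p, hp⟩
  exact (norm_eq_iInf_iff_real_inner_le_zero hXcv hp).mp heq

lemma sqrt_combo {c h : ℝ} (hc0 : 0 ≤ c) (hh0 : 0 < h) (hh1 : h ≤ 1) :
    (1 - h) + h * Real.sqrt c ≤ Real.sqrt (1 - h + h * c) := by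
  have hs0 : 0 ≤ Real.sqrt c := Real.sqrt_nonneg c
  have hsq : Real.sqrt c ^ 2 = c := Real.sq_sqrt hc0
  have hlhs : 0 ≤ (1 - h) + h * Real.sqrt c := by nlinarith
  have : ((1 - h) + h * Real.sqrt c) ^ 2 ≤ 1 - h + h * c := by
    nlinarith [sq_nonneg (Real.sqrt c - 1), mul_nonneg (sub_nonneg.mpr hh1) hh0.le]
  calc (1 - h) + h * Real.sqrt c = Real.sqrt (((1 - h) + h * Real.sqrt c) ^ 2) :=
        (Real.sqrt_sq hlhs).symm
    _ ≤ Real.sqrt (1 - h + h * c) := Real.sqrt_le_sqrt this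

lemma step_contract {E : Type*} [NormedAddCommGroup E] [InnerProductSpace ℝ E] [CompleteSpace E]
    {X : Set E} (hXcv : Convex ℝ X) {f : E → ℝ} {g : E → E}
    (hg : ∀ z, HasGradientAt f (g z) z) {μ L γ : ℝ}
    (hμ : 0 < μ) (hμL : μ ≤ L) (hLγ : L ≤ γ)
    (hsc : ∀ x ∈ X, ∀ y ∈ X, f y ≥ f x + ⟪g x, y - x⟫ + (μ/2) * ‖y - x‖^2)
    (hlip : ∀ z ∈ X, ∀ w ∈ X, ‖g z - g w‖ ≤ L * ‖z - w‖)
    {x xs xh : E} (hx : x ∈ X) (hxs : xs ∈ X) (hxh : xh ∈ X)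
    (hmin : ∀ z ∈ X, f xs ≤ f z)
    (hproj : ∀ z ∈ X, ‖xh - (x - (1/γ) • g x)‖ ≤ ‖z - (x - (1/γ) • g x)‖) :
    ‖xh - xs‖^2 ≤ (1 - μ/γ) * ‖x - xs‖^2 := by
  have hγ : 0 < γ := lt_of_lt_of_le hμ (hμL.trans hLγ)
  have hVI := proj_vi hXcv hxh hproj xs hxs
  have hexp : ⟪x - (1/γ) • g x - xh, xs - xh⟫
      = ⟪x - xh, xs - xh⟫ - (1/γ) * ⟪g x, xs - xh⟫ := by
    rw [show x - (1/γ) • g x - xh = (x - xh) - (1/γ) • g x by abel]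
    rw [inner_sub_left, real_inner_smul_left]
  rw [hexp] at hVI
  have hVI' : γ * ⟪x - xh, xs - xh⟫ ≤ ⟪g x, xs - xh⟫ := by
    have h2 : ⟪x - xh, xs - xh⟫ ≤ (1/γ) * ⟪g x, xs - xh⟫ := by linarith
    calc γ * ⟪x - xh, xs - xh⟫ ≤ γ * ((1/γ) * ⟪g x, xs - xh⟫) :=
          mul_le_mul_of_nonneg_left h2 hγ.le
      _ = ⟪g x, xs - xh⟫ := by field_simp
  have hdesc := descent_aux hXcv hg hlip hx hxh
  have hsc' := hsc x hx xs hxs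
  have hmin' := hmin xh hxh
  have hsplit : ⟪g x, xs - xh⟫ = ⟪g x, xs - x⟫ - ⟪g x, xh - x⟫ := by
    rw [← inner_sub_right]
    congr 1
    abel
  have hpol : 2 * ⟪x - xh, xs - xh⟫ = ‖x - xh‖^2 + ‖xs - xh‖^2 - ‖x - xs‖^2 := by
    have := norm_sub_sq_real (x - xh) (xs - xh)
    rw [show x - xh - (xs - xh) = x - xs by abel] at this
    linarith
  have hgB : γ * ⟪x - xh, xs - xh⟫ ≤ L/2 * ‖xh - x‖^2 - μ/2 * ‖xs - x‖^2 := by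
    rw [hsplit] at hVI'
    linarith
  have hnorm1 : ‖xh - x‖ = ‖x - xh‖ := norm_sub_rev _ _
  have hnorm2 : ‖xs - x‖ = ‖x - xs‖ := norm_sub_rev _ _
  have hkey : γ * ‖xs - xh‖^2 ≤ (γ - μ) * ‖x - xs‖^2 := by
    rw [hnorm1, hnorm2] at hgB
    nlinarith [hgB, hpol, mul_nonneg (sub_nonneg.mpr hLγ) (sq_nonneg ‖x - xh‖)]
  have hnorm3 : ‖xh - xs‖ = ‖xs - xh‖ := norm_sub_rev _ _
  rw [hnorm3, show (1 - μ/γ) = (γ - μ)/γ by field_simp, div_mul_eq_mul_div,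
    le_div_iff₀ hγ]
  linarith [hkey]

theorem stmt_3 {n : ℕ} (X : Set (EuclideanSpace ℝ (Fin n)))
    (hXne : X.Nonempty) (hXcl : IsClosed X) (hXcv : Convex ℝ X)
    (T : ℕ) (hT : 1 ≤ T)
    (f : ℕ → EuclideanSpace ℝ (Fin n) → ℝ)
    (g : ℕ → EuclideanSpace ℝ (Fin n) → EuclideanSpace ℝ (Fin n))
    (hg : ∀ t x, HasGradientAt (f t) (g t x) x)
    (μ L γ h : ℝ) (hμ : 0 < μ) (hμL : μ ≤ L) (hLγ : L ≤ γ)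
    (hh0 : 0 < h) (hh1 : h ≤ 1)
    (hsc : ∀ t ∈ Finset.Icc 1 T, ∀ x ∈ X, ∀ y ∈ X,
        f t y ≥ f t x + ⟪g t x, y - x⟫ + (μ/2) * ‖y - x‖^2)
    (hlip : ∀ t ∈ Finset.Icc 1 T, ∀ x ∈ X, ∀ y ∈ X, ‖g t x - g t y‖ ≤ L * ‖x - y‖)
    (xstar : ℕ → EuclideanSpace ℝ (Fin n))
    (hxstar : ∀ t ∈ Finset.Icc 1 T, xstar t ∈ X)
    (hmin : ∀ t ∈ Finset.Icc 1 T, ∀ z ∈ X, f t (xstar t) ≤ f t z)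
    (x : ℕ → EuclideanSpace ℝ (Fin n)) (hx1 : x 1 ∈ X)
    (xhat : ℕ → EuclideanSpace ℝ (Fin n))
    (hhat : ∀ t ∈ Finset.Icc 1 T, xhat t ∈ X)
    (hproj : ∀ t ∈ Finset.Icc 1 T, ∀ z ∈ X,
        ‖xhat t - (x t - (1/γ) • g t (x t))‖ ≤ ‖z - (x t - (1/γ) • g t (x t))‖)
    (hupd : ∀ t ∈ Finset.Icc 1 T, x (t+1) = x t + h • (xhat t - x t)) :
    ∑ t ∈ Finset.Icc 1 T, ‖x t - xstar t‖
      ≤ (1 / (1 - Real.sqrt (1 - h * μ / γ))) *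
          (‖x 1 - xstar 1‖ - Real.sqrt (1 - h * μ / γ) * ‖x T - xstar T‖)
        + (1 / (1 - Real.sqrt (1 - h * μ / γ))) *
          ∑ t ∈ Finset.Icc 2 T, ‖xstar t - xstar (t-1)‖ := by
  have hγ : 0 < γ := lt_of_lt_of_le hμ (hμL.trans hLγ)
  set ρ : ℝ := Real.sqrt (1 - h * μ / γ) with hρ
  have hc0 : 0 ≤ 1 - μ/γ := by
    rw [sub_nonneg, div_le_one hγ]
    exact hμL.trans hLγ
  have harg0 : 0 ≤ 1 - h * μ / γ := by
    rw [sub_nonneg, div_le_one hγ]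
    nlinarith
  have hρ0 : 0 ≤ ρ := Real.sqrt_nonneg _
  have hρ1 : ρ < 1 := by
    have h1 : 1 - h * μ / γ < 1 := by
      have : 0 < h * μ / γ := by positivity
      linarith
    calc ρ < Real.sqrt 1 := Real.sqrt_lt_sqrt harg0 h1
      _ = 1 := Real.sqrt_one
  have h1ρ : 0 < 1 - ρ := by linarith
  -- membership of iterates
  have hmem : ∀ t, 1 ≤ t → t ≤ T → x t ∈ X := by
    intro t
    induction t with
    | zero => intro h1 _; exact absurd h1 (by norm_num)
    | succ k ih =>
      intro _ h2
      rcases Nat.eq_zero_or_pos k with hk | hk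
      · subst hk; exact hx1
      · have hkIcc : k ∈ Finset.Icc 1 T := Finset.mem_Icc.mpr ⟨hk, by omega⟩
        have hxk := ih hk (by omega)
        have hhk := hhat k hkIcc
        rw [hupd k hkIcc,
          show x k + h • (xhat k - x k) = (1 - h) • x k + h • xhat k by module]
        exact hXcv hxk hhk (by linarith) hh0.le (by ring)
  -- one-step contraction
  have hstep : ∀ t, 1 ≤ t → t ≤ T → ‖x (t+1) - xstar t‖ ≤ ρ * ‖x t - xstar t‖ := by
    intro t h1 h2
    have htIcc : t ∈ Finset.Icc 1 T := Finset.mem_Icc.mpr ⟨h1, h2⟩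
    have hcontr := step_contract hXcv (hg t) hμ hμL hLγ (hsc t htIcc) (hlip t htIcc)
      (hmem t h1 h2) (hxstar t htIcc) (hhat t htIcc) (hmin t htIcc) (hproj t htIcc)
    have hhatnorm : ‖xhat t - xstar t‖ ≤ Real.sqrt (1 - μ/γ) * ‖x t - xstar t‖ := by
      calc ‖xhat t - xstar t‖ = Real.sqrt (‖xhat t - xstar t‖^2) :=
            (Real.sqrt_sq (norm_nonneg _)).symm
        _ ≤ Real.sqrt ((1 - μ/γ) * ‖x t - xstar t‖^2) := Real.sqrt_le_sqrt hcontr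
        _ = Real.sqrt (1 - μ/γ) * ‖x t - xstar t‖ := by
            rw [Real.sqrt_mul hc0, Real.sqrt_sq (norm_nonneg _)]
    rw [hupd t htIcc,
      show x t + h • (xhat t - x t) - xstar t
        = (1 - h) • (x t - xstar t) + h • (xhat t - xstar t) by module]
    have hcombo : (1 - h) + h * Real.sqrt (1 - μ/γ) ≤ ρ := by
      have := sqrt_combo hc0 hh0 hh1
      rw [show 1 - h + h * (1 - μ/γ) = 1 - h * μ / γ by ring] at this
      exact this
    calc ‖(1 - h) • (x t - xstar t) + h • (xhat t - xstar t)‖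
        ≤ ‖(1 - h) • (x t - xstar t)‖ + ‖h • (xhat t - xstar t)‖ := norm_add_le _ _
      _ = (1 - h) * ‖x t - xstar t‖ + h * ‖xhat t - xstar t‖ := by
          rw [norm_smul, norm_smul, Real.norm_eq_abs, Real.norm_eq_abs,
            abs_of_nonneg (by linarith : (0:ℝ) ≤ 1 - h), abs_of_nonneg hh0.le]
      _ ≤ (1 - h) * ‖x t - xstar t‖ + h * (Real.sqrt (1 - μ/γ) * ‖x t - xstar t‖) := by
          have := mul_le_mul_of_nonneg_left hhatnorm hh0.le
          linarith
      _ = ((1 - h) + h * Real.sqrt (1 - μ/γ)) * ‖x t - xstar t‖ := by ring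
      _ ≤ ρ * ‖x t - xstar t‖ :=
          mul_le_mul_of_nonneg_right hcombo (norm_nonneg _)
  -- chain inequality on [2, T]
  have hchain : ∀ t ∈ Finset.Icc 2 T,
      ‖x t - xstar t‖ ≤ ρ * ‖x (t-1) - xstar (t-1)‖ + ‖xstar t - xstar (t-1)‖ := by
    intro t ht
    rw [Finset.mem_Icc] at ht
    obtain ⟨h2t, htT⟩ := ht
    have hts : t = (t - 1) + 1 := by omega
    have h1 : 1 ≤ t - 1 := by omega
    have h2 : t - 1 ≤ T := by omega
    have hst := hstep (t - 1) h1 h2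
    rw [← hts] at hst
    calc ‖x t - xstar t‖ ≤ ‖x t - xstar (t-1)‖ + ‖xstar (t-1) - xstar t‖ := by
          have := norm_add_le (x t - xstar (t-1)) (xstar (t-1) - xstar t)
          rw [show x t - xstar (t-1) + (xstar (t-1) - xstar t) = x t - xstar t by abel] at this
          exact this
      _ ≤ ρ * ‖x (t-1) - xstar (t-1)‖ + ‖xstar t - xstar (t-1)‖ := by
          rw [norm_sub_rev (xstar (t-1))]
          linarith
  -- sums
  set d : ℕ → ℝ := fun t => ‖x t - xstar t‖ with hd
  set S : ℝ := ∑ t ∈ Finset.Icc 1 T, d t with hS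
  have hsplit1 : S = d 1 + ∑ t ∈ Finset.Icc 2 T, d t := by
    rw [hS, Finset.Icc_eq_cons_Ioc hT, Finset.sum_cons]
    congr 1
  have hsplit2 : S = (∑ t ∈ Finset.Icc 1 (T-1), d t) + d T := by
    rw [hS, show T = (T - 1) + 1 by omega, Finset.sum_Icc_succ_top (by omega)]
    rw [show T - 1 + 1 = T by omega]
  have hreindex : ∑ t ∈ Finset.Icc 2 T, d (t-1) = ∑ t ∈ Finset.Icc 1 (T-1), d t := by
    refine Finset.sum_nbij' (fun t => t - 1) (fun t => t + 1) ?_ ?_ ?_ ?_ ?_ <;>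
      simp only [Finset.mem_Icc] <;> intro a ha <;> first | omega | trivial
  have hsum2 : ∑ t ∈ Finset.Icc 2 T, d t
      ≤ ρ * (∑ t ∈ Finset.Icc 1 (T-1), d t) + ∑ t ∈ Finset.Icc 2 T, ‖xstar t - xstar (t-1)‖ := by
    calc ∑ t ∈ Finset.Icc 2 T, d t
        ≤ ∑ t ∈ Finset.Icc 2 T, (ρ * d (t-1) + ‖xstar t - xstar (t-1)‖) :=
          Finset.sum_le_sum hchain
      _ = ρ * (∑ t ∈ Finset.Icc 2 T, d (t-1)) + ∑ t ∈ Finset.Icc 2 T, ‖xstar t - xstar (t-1)‖ := by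
          rw [Finset.sum_add_distrib, Finset.mul_sum]
      _ = ρ * (∑ t ∈ Finset.Icc 1 (T-1), d t) + ∑ t ∈ Finset.Icc 2 T, ‖xstar t - xstar (t-1)‖ := by
          rw [hreindex]
  set E : ℝ := ∑ t ∈ Finset.Icc 2 T, ‖xstar t - xstar (t-1)‖ with hE
  have hkey : (1 - ρ) * S ≤ d 1 - ρ * d T + E := by
    have e1 : ∑ t ∈ Finset.Icc 2 T, d t = S - d 1 := by rw [hsplit1]; ring
    have e2 : ∑ t ∈ Finset.Icc 1 (T-1), d t = S - d T := by rw [hsplit2]; ring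
    have h1 : S - d 1 ≤ ρ * (S - d T) + E := by
      calc S - d 1 = ∑ t ∈ Finset.Icc 2 T, d t := e1.symm
        _ ≤ ρ * (∑ t ∈ Finset.Icc 1 (T-1), d t) + E := hsum2
        _ = ρ * (S - d T) + E := by rw [e2]
    nlinarith [h1]
  have hfin : S ≤ (d 1 - ρ * d T + E) / (1 - ρ) := by
    rw [le_div_iff₀ h1ρ]
    nlinarith [hkey]
  calc S ≤ (d 1 - ρ * d T + E) / (1 - ρ) := hfin
    _ = (1 / (1 - ρ)) * (d 1 - ρ * d T) + (1 / (1 - ρ)) * E := by ring
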